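/- arXiv:2102.01419 — 2 statements merged into one kernel-verified Lean document; each statement's English description precedes it below -/
import Mathlib

section
/- Under the hypotheses of the previous statement, if additionally K₁ = nγ/2 + o(n), K₂ = nγ/2 + o(n), p = α·(log n)/n, q = β·(log n)/n with α > β > 0 and γ ∈ (0,1], then P(X - Y ≤ 0) ≤ n^{-((α+β)γ/2 - γ√(αβ)) + o(1)} as n → ∞. Equivalently, limsup_{n→∞} (log P(Xₙ - Yₙ ≤ 0))/(log n) ≤ -((α+β)γ/2 - γ√(αβ)). -/
open Real Finset Filter

lemma binom_eval (K : ℕ) (x y : ℝ) :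
    ∑ k ∈ Finset.range (K+1), (K.choose k : ℝ) * x^k * y^(K-k) = (x+y)^K := by
  rw [add_pow]
  exact Finset.sum_congr rfl fun k _ => by ring

lemma S_bounds (t : ℝ) (ht1 : 1 ≤ t) (K₁ K₂ : ℕ) (p q : ℝ)
    (hp0 : 0 < p) (hp1 : p < 1) (hq0 : 0 < q) (hq1 : q < 1) :
    (1-p)^K₁ * (1-q)^K₂ ≤
      (∑ k ∈ Finset.range (K₁ + 1), ∑ j ∈ Finset.range (K₂ + 1),
        if (k : ℤ) - (j : ℤ) ≤ 0 then
          (K₁.choose k : ℝ) * p ^ k * (1 - p) ^ (K₁ - k) *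
          ((K₂.choose j : ℝ) * q ^ j * (1 - q) ^ (K₂ - j))
        else 0) ∧
    (∑ k ∈ Finset.range (K₁ + 1), ∑ j ∈ Finset.range (K₂ + 1),
        if (k : ℤ) - (j : ℤ) ≤ 0 then
          (K₁.choose k : ℝ) * p ^ k * (1 - p) ^ (K₁ - k) *
          ((K₂.choose j : ℝ) * q ^ j * (1 - q) ^ (K₂ - j))
        else 0)
      ≤ (p/t + (1-p))^K₁ * (q*t + (1-q))^K₂ := by
  have ht0 : 0 < t := lt_of_lt_of_le one_pos ht1
  have h1p : (0:ℝ) < 1 - p := by linarith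
  have h1q : (0:ℝ) < 1 - q := by linarith
  set F : ℕ → ℕ → ℝ := fun k j =>
    if (k : ℤ) - (j : ℤ) ≤ 0 then
      (K₁.choose k : ℝ) * p ^ k * (1 - p) ^ (K₁ - k) *
      ((K₂.choose j : ℝ) * q ^ j * (1 - q) ^ (K₂ - j))
    else 0 with hF
  have hnn : ∀ k j, 0 ≤ F k j := by
    intro k j
    rw [hF]
    dsimp only
    split
    · positivity
    · exact le_rfl
  constructor
  · have h2 : F 0 0 ≤ ∑ j ∈ Finset.range (K₂ + 1), F 0 j :=
      Finset.single_le_sum (fun j _ => hnn 0 j) (Finset.mem_range.2 (Nat.succ_pos _))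
    have h3 : (∑ j ∈ Finset.range (K₂ + 1), F 0 j)
        ≤ ∑ k ∈ Finset.range (K₁ + 1), ∑ j ∈ Finset.range (K₂ + 1), F k j :=
      Finset.single_le_sum
        (f := fun k => ∑ j ∈ Finset.range (K₂ + 1), F k j)
        (fun k _ => Finset.sum_nonneg fun j _ => hnn k j)
        (Finset.mem_range.2 (Nat.succ_pos _))
    refine le_trans (le_of_eq ?_) (h2.trans h3)
    rw [hF]; simp
  · have key : (∑ k ∈ Finset.range (K₁ + 1), ∑ j ∈ Finset.range (K₂ + 1), F k j)
        ≤ ∑ k ∈ Finset.range (K₁ + 1), ∑ j ∈ Finset.range (K₂ + 1),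
          ((K₁.choose k : ℝ) * (p/t) ^ k * (1 - p) ^ (K₁ - k)) *
          ((K₂.choose j : ℝ) * (q*t) ^ j * (1 - q) ^ (K₂ - j)) := by
      apply Finset.sum_le_sum; intro k _
      apply Finset.sum_le_sum; intro j _
      have hterm : ((K₁.choose k : ℝ) * (p/t) ^ k * (1 - p) ^ (K₁ - k)) *
          ((K₂.choose j : ℝ) * (q*t) ^ j * (1 - q) ^ (K₂ - j))
          = ((K₁.choose k : ℝ) * p ^ k * (1 - p) ^ (K₁ - k) *
            ((K₂.choose j : ℝ) * q ^ j * (1 - q) ^ (K₂ - j))) * (t^j / t^k) := by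
        rw [div_pow, mul_pow]; field_simp
      rw [hF]
      dsimp only
      split
      · rename_i hkj
        have hkj' : k ≤ j := by exact_mod_cast sub_nonpos.mp hkj
        rw [hterm]
        have h1 : (1:ℝ) ≤ t^j / t^k :=
          (one_le_div (pow_pos ht0 k)).2 (pow_le_pow_right₀ ht1 hkj')
        have h2 : 0 ≤ (K₁.choose k : ℝ) * p ^ k * (1 - p) ^ (K₁ - k) *
            ((K₂.choose j : ℝ) * q ^ j * (1 - q) ^ (K₂ - j)) := by positivity
        exact le_mul_of_one_le_right h2 h1
      · positivity
    refine key.trans ?_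
    rw [← Finset.sum_mul_sum, binom_eval, binom_eval]

lemma neg_two_mul_le_log_one_sub {p : ℝ} (hp0 : 0 < p) (hp1 : p ≤ 1/2) :
    -(2*p) ≤ Real.log (1-p) := by
  have h1p : (0:ℝ) < 1 - p := by linarith
  have h := Real.log_le_sub_one_of_pos (inv_pos.2 h1p)
  rw [Real.log_inv] at h
  have hinv : (1-p) * (1-p)⁻¹ = 1 := mul_inv_cancel₀ h1p.ne'
  have h2 : (1-p)⁻¹ ≤ 1 + 2*p := by nlinarith [inv_pos.2 h1p, mul_pos hp0 hp0]
  linarith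

/-- For independent `Xₙ ~ Binomial(K₁(n), α log n / n)`, `Yₙ ~ Binomial(K₂(n), β log n / n)`
with `K₁(n) = nγ/2 + o(n)`, `K₂(n) = nγ/2 + o(n)`, `α > β > 0`, `γ ∈ (0,1]`:
`P(Xₙ - Yₙ ≤ 0) ≤ n^{-((α+β)γ/2 - γ√(αβ)) + o(1)}`, i.e.
`limsup (log P(Xₙ - Yₙ ≤ 0)) / log n ≤ -((α+β)γ/2 - γ√(αβ))`. -/
theorem binomial_diff_tail_asymptotic (α β γ : ℝ) (hβ : 0 < β) (hαβ : β < α)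
    (hγ0 : 0 < γ) (hγ1 : γ ≤ 1) (K₁ K₂ : ℕ → ℕ)
    (hK₁ : Tendsto (fun n => (K₁ n : ℝ) / n) atTop (nhds (γ / 2)))
    (hK₂ : Tendsto (fun n => (K₂ n : ℝ) / n) atTop (nhds (γ / 2))) :
    Filter.limsup
      (fun n : ℕ =>
        Real.log
          (∑ k ∈ Finset.range (K₁ n + 1), ∑ j ∈ Finset.range (K₂ n + 1),
            if (k : ℤ) - (j : ℤ) ≤ 0 then
              ((K₁ n).choose k : ℝ) * (α * Real.log n / n) ^ k *
                (1 - α * Real.log n / n) ^ (K₁ n - k) *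
              (((K₂ n).choose j : ℝ) * (β * Real.log n / n) ^ j *
                (1 - β * Real.log n / n) ^ (K₂ n - j))
            else 0) / Real.log n) atTop
      ≤ -((α + β) * γ / 2 - γ * Real.sqrt (α * β)) := by
  have hα : 0 < α := hβ.trans hαβ
  set X := Real.sqrt (α * β) with hX
  set t := Real.sqrt α / Real.sqrt β with htdef
  have hsa : 0 < Real.sqrt α := Real.sqrt_pos.2 hα
  have hsb : 0 < Real.sqrt β := Real.sqrt_pos.2 hβ
  have h1 : Real.sqrt α * Real.sqrt α = α := Real.mul_self_sqrt hα.le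
  have h2 : Real.sqrt β * Real.sqrt β = β := Real.mul_self_sqrt hβ.le
  have ht1 : 1 < t := (one_lt_div hsb).2 (Real.sqrt_lt_sqrt hβ.le hαβ)
  have ht0 : 0 < t := lt_trans one_pos ht1
  have hαt : α / t = X := by
    rw [hX, htdef, Real.sqrt_mul hα.le, div_div_eq_mul_div, div_eq_iff hsa.ne']
    linear_combination (-Real.sqrt β) * h1
  have hβt : β * t = X := by
    rw [hX, htdef, Real.sqrt_mul hα.le, mul_div_assoc', div_eq_iff hsb.ne']
    linear_combination (-Real.sqrt α) * h2
  set u : ℕ → ℝ := fun n : ℕ =>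
        Real.log
          (∑ k ∈ Finset.range (K₁ n + 1), ∑ j ∈ Finset.range (K₂ n + 1),
            if (k : ℤ) - (j : ℤ) ≤ 0 then
              ((K₁ n).choose k : ℝ) * (α * Real.log n / n) ^ k *
                (1 - α * Real.log n / n) ^ (K₁ n - k) *
              (((K₂ n).choose j : ℝ) * (β * Real.log n / n) ^ j *
                (1 - β * Real.log n / n) ^ (K₂ n - j))
            else 0) / Real.log n with hu
  set v : ℕ → ℝ := fun n : ℕ =>
    (K₁ n : ℝ) / n * (X - α) + (K₂ n : ℝ) / n * (X - β) with hvdef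
  set c : ℝ := -(2*α*γ + 2*β*γ) with hc
  have hv : Tendsto v atTop (nhds (γ/2 * (X - α) + γ/2 * (X - β))) :=
    (hK₁.mul_const _).add (hK₂.mul_const _)
  -- eventual hypotheses
  have hlog0 : Tendsto (fun n : ℕ => Real.log n / n) atTop (nhds 0) :=
    Real.isLittleO_log_id_atTop.tendsto_div_nhds_zero.comp tendsto_natCast_atTop_atTop
  have hp_small : ∀ᶠ n : ℕ in atTop, α * (Real.log n / n) < 1/2 := by
    have : Tendsto (fun n : ℕ => α * (Real.log n / n)) atTop (nhds 0) := by
      simpa using hlog0.const_mul α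
    exact this.eventually_lt_const (by norm_num)
  have hq_small : ∀ᶠ n : ℕ in atTop, β * (Real.log n / n) < 1/2 := by
    have : Tendsto (fun n : ℕ => β * (Real.log n / n)) atTop (nhds 0) := by
      simpa using hlog0.const_mul β
    exact this.eventually_lt_const (by norm_num)
  have hK1lt : ∀ᶠ n : ℕ in atTop, (K₁ n : ℝ) / n < γ :=
    hK₁.eventually_lt_const (by linarith)
  have hK2lt : ∀ᶠ n : ℕ in atTop, (K₂ n : ℝ) / n < γ :=
    hK₂.eventually_lt_const (by linarith)
  have hub : ∀ᶠ n : ℕ in atTop, u n ≤ v n ∧ c ≤ u n := by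
    filter_upwards [hp_small, hq_small, hK1lt, hK2lt, eventually_ge_atTop 2]
      with n hps hqs hk1 hk2 hn
    have hn1 : (1:ℝ) < (n:ℝ) := by exact_mod_cast Nat.lt_of_lt_of_le Nat.one_lt_two hn
    have hN : (0:ℝ) < (n:ℝ) := by linarith
    have hlogn : 0 < Real.log n := Real.log_pos hn1
    set p := α * Real.log n / (n:ℝ) with hp
    set q := β * Real.log n / (n:ℝ) with hq
    have hp0 : 0 < p := by rw [hp]; positivity
    have hq0 : 0 < q := by rw [hq]; positivity
    have hp12 : p < 1/2 := by rw [hp, mul_div_assoc]; exact hps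
    have hq12 : q < 1/2 := by rw [hq, mul_div_assoc]; exact hqs
    have h1p : (0:ℝ) < 1 - p := by linarith
    have h1q : (0:ℝ) < 1 - q := by linarith
    obtain ⟨hlow, hupp⟩ := S_bounds t ht1.le (K₁ n) (K₂ n) p q hp0 (by linarith) hq0 (by linarith)
    set S : ℝ := ∑ k ∈ Finset.range (K₁ n + 1), ∑ j ∈ Finset.range (K₂ n + 1),
        if (k : ℤ) - (j : ℤ) ≤ 0 then
          ((K₁ n).choose k : ℝ) * p ^ k * (1 - p) ^ (K₁ n - k) *
          (((K₂ n).choose j : ℝ) * q ^ j * (1 - q) ^ (K₂ n - j))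
        else 0 with hS
    have hun : u n = Real.log S / Real.log n := rfl
    have hS0 : 0 < S :=
      lt_of_lt_of_le (mul_pos (pow_pos h1p _) (pow_pos h1q _)) hlow
    have hx1 : (0:ℝ) < p/t + (1-p) := add_pos (div_pos hp0 ht0) h1p
    have hx2 : (0:ℝ) < q*t + (1-q) := add_pos (mul_pos hq0 ht0) h1q
    clear_value p q S
    clear_value u v c
    clear hu hS
    constructor
    · -- upper bound
      have hlogS : Real.log S ≤ (K₁ n : ℝ) * (p/t - p) + (K₂ n : ℝ) * (q*t - q) := by
        have e0 : Real.log S ≤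
            (K₁ n : ℝ) * Real.log (p/t + (1-p)) + (K₂ n : ℝ) * Real.log (q*t + (1-q)) := by
          calc Real.log S ≤ Real.log ((p/t + (1-p))^(K₁ n) * (q*t + (1-q))^(K₂ n)) :=
                Real.log_le_log hS0 hupp
            _ = (K₁ n : ℝ) * Real.log (p/t + (1-p)) + (K₂ n : ℝ) * Real.log (q*t + (1-q)) := by
                rw [Real.log_mul (pow_pos hx1 _).ne' (pow_pos hx2 _).ne',
                  Real.log_pow, Real.log_pow]
        have e1 : Real.log (p/t + (1-p)) ≤ p/t - p := by
          have := Real.log_le_sub_one_of_pos hx1; linarith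
        have e2 : Real.log (q*t + (1-q)) ≤ q*t - q := by
          have := Real.log_le_sub_one_of_pos hx2; linarith
        have c1 : (K₁ n : ℝ) * Real.log (p/t + (1-p)) ≤ (K₁ n : ℝ) * (p/t - p) :=
          mul_le_mul_of_nonneg_left e1 (Nat.cast_nonneg _)
        have c2 : (K₂ n : ℝ) * Real.log (q*t + (1-q)) ≤ (K₂ n : ℝ) * (q*t - q) :=
          mul_le_mul_of_nonneg_left e2 (Nat.cast_nonneg _)
        linarith
      have hptX : p/t - p = Real.log n / n * (X - α) := by
        rw [← hαt, hp]; field_simp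
      have hqtX : q*t - q = Real.log n / n * (X - β) := by
        rw [← hβt, hq]; field_simp
      rw [hun, hvdef, div_le_iff₀ hlogn]
      calc Real.log S ≤ (K₁ n : ℝ) * (p/t - p) + (K₂ n : ℝ) * (q*t - q) := hlogS
        _ = ((K₁ n : ℝ) / n * (X - α) + (K₂ n : ℝ) / n * (X - β)) * Real.log n := by
            rw [hptX, hqtX]; field_simp
    · -- lower bound
      have hlogS : -(2*p*(K₁ n : ℝ) + 2*q*(K₂ n : ℝ)) ≤ Real.log S := by
        have e0 : (K₁ n : ℝ) * Real.log (1-p) + (K₂ n : ℝ) * Real.log (1-q) ≤ Real.log S := by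
          calc (K₁ n : ℝ) * Real.log (1-p) + (K₂ n : ℝ) * Real.log (1-q)
              = Real.log ((1-p)^(K₁ n) * (1-q)^(K₂ n)) := by
                rw [Real.log_mul (pow_pos h1p _).ne' (pow_pos h1q _).ne',
                  Real.log_pow, Real.log_pow]
            _ ≤ Real.log S := Real.log_le_log (by positivity) hlow
        have e1 : -(2*p) ≤ Real.log (1-p) := neg_two_mul_le_log_one_sub hp0 hp12.le
        have e2 : -(2*q) ≤ Real.log (1-q) := neg_two_mul_le_log_one_sub hq0 hq12.le
        have c1 : (K₁ n : ℝ) * (-(2*p)) ≤ (K₁ n : ℝ) * Real.log (1-p) :=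
          mul_le_mul_of_nonneg_left e1 (Nat.cast_nonneg _)
        have c2 : (K₂ n : ℝ) * (-(2*q)) ≤ (K₂ n : ℝ) * Real.log (1-q) :=
          mul_le_mul_of_nonneg_left e2 (Nat.cast_nonneg _)
        linarith
      rw [hun, hc, le_div_iff₀ hlogn]
      have hpn : p * n = α * Real.log n := by rw [hp]; field_simp
      have hqn : q * n = β * Real.log n := by rw [hq]; field_simp
      have hK1n : (K₁ n : ℝ) ≤ γ * n := by
        rw [div_lt_iff₀ hN] at hk1; linarith
      have hK2n : (K₂ n : ℝ) ≤ γ * n := by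
        rw [div_lt_iff₀ hN] at hk2; linarith
      have b1 : 2*p*(K₁ n : ℝ) ≤ 2*α*γ*Real.log n := by
        have m1 : 2*p*(K₁ n : ℝ) ≤ 2*p*(γ*(n:ℝ)) :=
          mul_le_mul_of_nonneg_left hK1n (by linarith)
        have m2 : 2*p*(γ*(n:ℝ)) = 2*α*γ*Real.log n := by linear_combination 2*γ*hpn
        linarith
      have b2 : 2*q*(K₂ n : ℝ) ≤ 2*β*γ*Real.log n := by
        have m1 : 2*q*(K₂ n : ℝ) ≤ 2*q*(γ*(n:ℝ)) :=
          mul_le_mul_of_nonneg_left hK2n (by linarith)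
        have m2 : 2*q*(γ*(n:ℝ)) = 2*β*γ*Real.log n := by linear_combination 2*γ*hqn
        linarith
      linarith [hlogS, b1, b2]
  have hfinal : γ/2 * (X - α) + γ/2 * (X - β) = -((α + β) * γ / 2 - γ * X) := by ring
  calc limsup u atTop ≤ limsup v atTop :=
        limsup_le_limsup (hub.mono fun n h => h.1)
          (isCoboundedUnder_le_of_eventually_le atTop (hub.mono fun n h => h.2))
          hv.isBoundedUnder_le
    _ = γ/2 * (X - α) + γ/2 * (X - β) := hv.limsup_eq
    _ = -((α + β) * γ / 2 - γ * X) := hfinal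
end

section
/- Fix α > β > 0 and γ ∈ (0,1) with γ > 2/(√α - √β)². For each even n, let G ~ G(n; p, q) with p = α(log n)/n, q = β(log n)/n and planted balanced communities (S₁, S₂); independently keep each vertex with probability γ to form V^♮, and set Rᵢ = Sᵢ ∩ V^♮. Define Ŝᵢ = Rᵢ ∪ {v ∉ V^♮ : e(v, Rᵢ) > e(v, R_{3-i})}, where e(v, S) is the number of edges from v to S. Then P((Ŝ₁, Ŝ₂) = (S₁, S₂)) → 1 as n → ∞. -/
open MeasureTheory ProbabilityTheory Finset Filter

/-- Community membership of vertex `v` among `n = 2k` vertices: the two planted balanced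
communities are the first `k` and the last `k` vertices. -/
def community (k : ℕ) (v : Fin (2 * k)) : Bool := decide ((v : ℕ) < k)

/-- The planted community labelled `b`. -/
def plantedS (k : ℕ) (b : Bool) : Finset (Fin (2 * k)) :=
  Finset.univ.filter fun v => community k v = b

/-- The sampled part `R_b = S_b ∩ V♮` of community `b`. -/
def sampledR {Ωk : Type*} (k : ℕ) (Keep : Fin (2 * k) → Ωk → Bool) (b : Bool) (ω : Ωk) :
    Finset (Fin (2 * k)) :=
  (plantedS k b).filter fun v => Keep v ω = true

/-- `e(v, T)`: the number of edges between vertex `v` and the vertex set `T`. -/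
def edgeCount {Ωk : Type*} (k : ℕ) (Edge : Fin (2 * k) → Fin (2 * k) → Ωk → Bool)
    (v : Fin (2 * k)) (T : Finset (Fin (2 * k))) (ω : Ωk) : ℕ :=
  (T.filter fun w => Edge v w ω = true).card

/-- The majority-vote estimate `Ŝ_b = R_b ∪ {v ∉ V♮ : e(v,R_b) > e(v,R_{¬b})}`, built from
(estimates of) the sampled communities `Rb`. -/
def majorityS {Ωk : Type*} (k : ℕ) (Edge : Fin (2 * k) → Fin (2 * k) → Ωk → Bool)
    (Keep : Fin (2 * k) → Ωk → Bool) (Rb : Bool → Ωk → Finset (Fin (2 * k)))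
    (b : Bool) (ω : Ωk) : Finset (Fin (2 * k)) :=
  Rb b ω ∪ Finset.univ.filter fun v =>
    Keep v ω = false ∧ edgeCount k Edge v (Rb b ω) ω > edgeCount k Edge v (Rb (!b) ω) ω

lemma card_plantedS_true (k : ℕ) : (plantedS k true).card = k := by
  rcases Nat.eq_zero_or_pos k with hk | hk
  · subst hk
    simp [plantedS]
  · have hb : k < 2 * k := by omega
    have h : plantedS k true = Finset.Iio (⟨k, hb⟩ : Fin (2*k)) := by
      ext w
      simp [plantedS, community, Fin.lt_def]
    rw [h, Fin.card_Iio]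

lemma card_plantedS (k : ℕ) (b : Bool) : (plantedS k b).card = k := by
  cases b
  · have h : plantedS k false = Finset.univ \ plantedS k true := by
      ext w
      simp [plantedS, Finset.mem_sdiff]
    rw [h, Finset.card_sdiff_of_subset (Finset.subset_univ _), card_plantedS_true]
    simp [Finset.card_univ]
    omega
  · exact card_plantedS_true k

lemma edgeCount_sampledR {Ωk : Type*} (k : ℕ) (Edge : Fin (2 * k) → Fin (2 * k) → Ωk → Bool)
    (Keep : Fin (2 * k) → Ωk → Bool) (v : Fin (2 * k)) (b : Bool) (ω : Ωk) :
    edgeCount k Edge v (sampledR k Keep b ω) ω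
      = ((plantedS k b).filter (fun w => Keep w ω = true ∧ Edge v w ω = true)).card := by
  simp [edgeCount, sampledR, Finset.filter_filter]

lemma good_imp {Ωk : Type*} (k : ℕ) (Edge : Fin (2 * k) → Fin (2 * k) → Ωk → Bool)
    (Keep : Fin (2 * k) → Ωk → Bool) (ω : Ωk)
    (H : ∀ v, Keep v ω = false →
      edgeCount k Edge v (sampledR k Keep (community k v) ω) ω
        > edgeCount k Edge v (sampledR k Keep (!(community k v)) ω) ω) :
    ∀ b, majorityS k Edge Keep (fun b' ω' => sampledR k Keep b' ω') b ω = plantedS k b := by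
  intro b
  ext w
  simp only [majorityS, Finset.mem_union, Finset.mem_filter, Finset.mem_univ, true_and]
  constructor
  · rintro (hw | ⟨hkf, hgt⟩)
    · exact Finset.filter_subset _ _ hw
    · by_cases hc : community k w = b
      · simp [plantedS, hc]
      · have hc' : community k w = !b := by cases hcc : community k w <;> cases b <;> simp_all
        have h2 := H w hkf
        rw [hc', Bool.not_not] at h2
        omega
  · intro hw
    have hcb : community k w = b := by simpa [plantedS] using hw
    cases hkv : Keep w ω
    · right
      refine ⟨rfl, ?_⟩
      have := H w hkv
      rwa [hcb] at this
    · left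
      simp [sampledR, plantedS, hcb, hkv]


abbrev EIdx (k : ℕ) := {p : Fin (2*k) × Fin (2*k) // p.1 < p.2} ⊕ Fin (2*k)

noncomputable def pidx (k : ℕ) (v w : Fin (2*k)) : EIdx k :=
  if h : v < w then Sum.inl ⟨(v,w), h⟩ else if h' : w < v then Sum.inl ⟨(w,v), h'⟩ else Sum.inr v

lemma pidx_cases (k : ℕ) (v w : Fin (2*k)) (hvw : v ≠ w) :
    (∃ h, pidx k v w = Sum.inl ⟨(v,w), h⟩) ∨ (∃ h, pidx k v w = Sum.inl ⟨(w,v), h⟩) := by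
  rcases hvw.lt_or_gt with h | h
  · exact Or.inl ⟨h, by simp [pidx, h]⟩
  · exact Or.inr ⟨h, by simp [pidx, h, lt_asymm h]⟩

lemma pidx_ne_inr (k : ℕ) (v w u : Fin (2*k)) (hvw : v ≠ w) : pidx k v w ≠ Sum.inr u := by
  rcases pidx_cases k v w hvw with ⟨h, e⟩ | ⟨h, e⟩ <;> rw [e] <;> simp

lemma pidx_ne_pidx (k : ℕ) (v i w : Fin (2*k)) (hvi : v ≠ i) (hvw : v ≠ w) (hiw : i ≠ w) :
    pidx k v i ≠ pidx k v w := by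
  rcases pidx_cases k v i hvi with ⟨h1, e1⟩ | ⟨h1, e1⟩ <;>
    rcases pidx_cases k v w hvw with ⟨h2, e2⟩ | ⟨h2, e2⟩ <;> rw [e1, e2] <;> intro hEq <;>
    simp only [Sum.inl.injEq, Subtype.mk.injEq, Prod.mk.injEq] at hEq <;>
    obtain ⟨ha, hb⟩ := hEq
  · exact hiw hb
  · exact hvw ha
  · exact hvi ha.symm
  · exact hiw ha

section Prob

variable {Ωk : Type*} [MeasurableSpace Ωk] {μ : Measure Ωk} {k : ℕ}
  {Edge : Fin (2*k) → Fin (2*k) → Ωk → Bool} {Keep : Fin (2*k) → Ωk → Bool}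

noncomputable def Fam (k : ℕ) (Edge : Fin (2*k) → Fin (2*k) → Ωk → Bool)
    (Keep : Fin (2*k) → Ωk → Bool) : EIdx k → Ωk → Bool :=
  Sum.elim (fun e => Edge e.1.1 e.1.2) (fun v => Keep v)

lemma Fam_inr (w : Fin (2*k)) : Fam k Edge Keep (Sum.inr w) = Keep w := rfl

lemma Fam_pidx (hsym : ∀ i j, Edge i j = Edge j i) {v w : Fin (2*k)} (hvw : v ≠ w) :
    Fam k Edge Keep (pidx k v w) = Edge v w := by
  rcases pidx_cases k v w hvw with ⟨h, e⟩ | ⟨h, e⟩ <;> rw [e]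
  · rfl
  · exact (hsym w v).symm ▸ rfl

lemma Fam_meas (hmE : ∀ i j, Measurable (Edge i j)) (hmK : ∀ v, Measurable (Keep v)) :
    ∀ j, Measurable (Fam k Edge Keep j) := by
  rintro (e | v)
  · exact hmE e.1.1 e.1.2
  · exact hmK v

/-- The Bernoulli-type indicator of "w kept and edge from v to w present". -/
noncomputable def Zf (k : ℕ) (Edge : Fin (2*k) → Fin (2*k) → Ωk → Bool)
    (Keep : Fin (2*k) → Ωk → Bool) (v w : Fin (2*k)) (ω : Ωk) : ℝ :=
  if Keep w ω = true ∧ Edge v w ω = true then 1 else 0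

lemma Zf_meas (hmE : ∀ i j, Measurable (Edge i j)) (hmK : ∀ v, Measurable (Keep v))
    (v w : Fin (2*k)) : Measurable (Zf k Edge Keep v w) := by
  have hs : MeasurableSet {ω | Keep w ω = true ∧ Edge v w ω = true} := by
    have : {ω | Keep w ω = true ∧ Edge v w ω = true}
        = Keep w ⁻¹' {true} ∩ Edge v w ⁻¹' {true} := rfl
    rw [this]
    exact ((hmK w) (by trivial)).inter ((hmE v w) (by trivial))
  exact Measurable.ite hs measurable_const measurable_const

lemma Zf_nonneg (v w : Fin (2*k)) (ω : Ωk) : 0 ≤ Zf k Edge Keep v w ω := by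
  unfold Zf; split <;> norm_num

lemma Zf_le_one (v w : Fin (2*k)) (ω : Ωk) : Zf k Edge Keep v w ω ≤ 1 := by
  unfold Zf; split <;> norm_num

def evb {k : ℕ} (U : Finset (EIdx k)) (x : ↥U → Bool) (j : EIdx k) : Bool :=
  if h : j ∈ U then x ⟨j, h⟩ else false

lemma integral_prod_exp
    (hsym : ∀ i j, Edge i j = Edge j i)
    (hmE : ∀ i j, Measurable (Edge i j)) (hmK : ∀ v, Measurable (Keep v))
    (hindep : iIndepFun (m := fun _ => (⊤ : MeasurableSpace Bool)) (Fam k Edge Keep) μ)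
    (v : Fin (2*k)) (a : Fin (2*k) → ℝ) (s : Finset (Fin (2*k))) (hv : v ∉ s) :
    ∫ ω, ∏ w ∈ s, Real.exp (a w * Zf k Edge Keep v w ω) ∂μ
      = ∏ w ∈ s, ∫ ω, Real.exp (a w * Zf k Edge Keep v w ω) ∂μ := by
  classical
  haveI : IsProbabilityMeasure μ := hindep.isProbabilityMeasure
  induction s using Finset.induction_on with
  | empty => simp
  | @insert i s his ih =>
      have hvi : v ≠ i := fun h => hv (h ▸ Finset.mem_insert_self i s)
      have hvs : v ∉ s := fun h => hv (Finset.mem_insert_of_mem h)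
      -- index sets
      set S : Finset (EIdx k) := {pidx k v i, Sum.inr i} with hS
      set T : Finset (EIdx k) := s.biUnion (fun w => {pidx k v w, Sum.inr w}) with hT
      have hST : Disjoint S T := by
        rw [Finset.disjoint_left]
        intro x hxS hxT
        rw [hT, Finset.mem_biUnion] at hxT
        obtain ⟨w, hws, hxw⟩ := hxT
        have hvw : v ≠ w := fun h => hvs (h ▸ hws)
        have hiw : i ≠ w := fun h => his (h ▸ hws)
        rw [hS] at hxS
        simp only [Finset.mem_insert, Finset.mem_singleton] at hxS hxw
        rcases hxS with rfl | rfl <;> rcases hxw with h | h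
        · exact pidx_ne_pidx k v i w hvi hvw hiw h
        · exact pidx_ne_inr k v i w hvi h
        · exact pidx_ne_inr k v w i hvw h.symm
        · exact hiw (by injection h)
      have hIF := hindep.indepFun_finset S T hST (Fam_meas hmE hmK)
      set φS : (↥S → Bool) → ℝ := fun x =>
        Real.exp (a i * (if evb S x (Sum.inr i) = true ∧ evb S x (pidx k v i) = true
          then (1:ℝ) else 0)) with hφSdef
      set φT : (↥T → Bool) → ℝ := fun x =>
        ∏ w ∈ s, Real.exp (a w * (if evb T x (Sum.inr w) = true ∧ evb T x (pidx k v w) = true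
          then (1:ℝ) else 0)) with hφTdef
      have hφS : (fun ω => φS (fun j => Fam k Edge Keep j ω))
          = fun ω => Real.exp (a i * Zf k Edge Keep v i ω) := by
        funext ω
        have h1 : Sum.inr i ∈ S := by simp [hS]
        have h2 : pidx k v i ∈ S := by simp [hS]
        simp only [hφSdef, evb, dif_pos h1, dif_pos h2, Fam_inr, Fam_pidx hsym hvi, Zf]
      have hφT : (fun ω => φT (fun j => Fam k Edge Keep j ω))
          = fun ω => ∏ w ∈ s, Real.exp (a w * Zf k Edge Keep v w ω) := by
        funext ω
        rw [hφTdef]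
        refine Finset.prod_congr rfl (fun w hw => ?_)
        have hvw : v ≠ w := fun h => hvs (h ▸ hw)
        have h1 : Sum.inr w ∈ T := by
          rw [hT, Finset.mem_biUnion]; exact ⟨w, hw, by simp⟩
        have h2 : pidx k v w ∈ T := by
          rw [hT, Finset.mem_biUnion]; exact ⟨w, hw, by simp⟩
        simp only [evb, dif_pos h1, dif_pos h2, Fam_inr, Fam_pidx hsym hvw, Zf]
      have hIndep2 : IndepFun (fun ω => Real.exp (a i * Zf k Edge Keep v i ω))
          (fun ω => ∏ w ∈ s, Real.exp (a w * Zf k Edge Keep v w ω)) μ := by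
        have := hIF.comp (measurable_of_countable φS) (measurable_of_countable φT)
        rwa [show (φS ∘ fun ω (j : ↥S) => Fam k Edge Keep j ω)
            = (fun ω => φS (fun j => Fam k Edge Keep j ω)) from rfl,
          show (φT ∘ fun ω (j : ↥T) => Fam k Edge Keep j ω)
            = (fun ω => φT (fun j => Fam k Edge Keep j ω)) from rfl, hφS, hφT] at this
      have hXm : Measurable (fun ω => Real.exp (a i * Zf k Edge Keep v i ω)) :=
        (((Zf_meas hmE hmK v i).const_mul (a i)).exp)
      have hYm : Measurable (fun ω => ∏ w ∈ s, Real.exp (a w * Zf k Edge Keep v w ω)) :=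
        Finset.measurable_prod _ (fun w _ => ((Zf_meas hmE hmK v w).const_mul (a w)).exp)
      have key := hIndep2.integral_mul_eq_mul_integral
        hXm.aestronglyMeasurable hYm.aestronglyMeasurable
      simp only [Finset.prod_insert his]
      calc ∫ ω, Real.exp (a i * Zf k Edge Keep v i ω)
              * ∏ w ∈ s, Real.exp (a w * Zf k Edge Keep v w ω) ∂μ
          = (∫ ω, Real.exp (a i * Zf k Edge Keep v i ω) ∂μ)
              * ∫ ω, ∏ w ∈ s, Real.exp (a w * Zf k Edge Keep v w ω) ∂μ := key
        _ = _ := by rw [ih hvs]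


lemma measurableSet_KE (hmE : ∀ i j, Measurable (Edge i j)) (hmK : ∀ v, Measurable (Keep v))
    (v w : Fin (2*k)) : MeasurableSet {ω | Keep w ω = true ∧ Edge v w ω = true} := by
  have : {ω | Keep w ω = true ∧ Edge v w ω = true}
      = Keep w ⁻¹' {true} ∩ Edge v w ⁻¹' {true} := rfl
  rw [this]
  exact ((hmK w) (by trivial)).inter ((hmE v w) (by trivial))

lemma integral_exp_single [IsProbabilityMeasure μ]
    (hmE : ∀ i j, Measurable (Edge i j)) (hmK : ∀ v, Measurable (Keep v))
    (v w : Fin (2*k)) (a : ℝ) :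
    ∫ ω, Real.exp (a * Zf k Edge Keep v w ω) ∂μ
      = 1 + (Real.exp a - 1) * (μ {ω | Keep w ω = true ∧ Edge v w ω = true}).toReal := by
  have hA := measurableSet_KE (Ωk := Ωk) hmE hmK v w
  have heq : (fun ω => Real.exp (a * Zf k Edge Keep v w ω))
      = fun ω => Set.indicator {ω | Keep w ω = true ∧ Edge v w ω = true}
          (fun _ => Real.exp a - 1) ω + 1 := by
    funext ω
    by_cases h : ω ∈ {ω | Keep w ω = true ∧ Edge v w ω = true}
    · rw [Set.indicator_of_mem h]
      have : Zf k Edge Keep v w ω = 1 := if_pos h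
      rw [this, mul_one]
      ring
    · rw [Set.indicator_of_notMem h]
      have : Zf k Edge Keep v w ω = 0 := if_neg h
      rw [this, mul_zero, Real.exp_zero]
      ring
  rw [heq, integral_add ((integrable_const _).indicator hA) (integrable_const 1),
    integral_indicator_const _ hA, integral_const]
  simp only [Measure.real, measure_univ, ENNReal.toReal_one, smul_eq_mul, one_mul, mul_one]
  ring

lemma measure_KE
    (hsym : ∀ i j, Edge i j = Edge j i)
    (hmE : ∀ i j, Measurable (Edge i j)) (hmK : ∀ v, Measurable (Keep v))
    (hindep : iIndepFun (m := fun _ => (⊤ : MeasurableSpace Bool)) (Fam k Edge Keep) μ)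
    {v w : Fin (2*k)} (hvw : v ≠ w) :
    μ {ω | Keep w ω = true ∧ Edge v w ω = true}
      = μ {ω | Keep w ω = true} * μ {ω | Edge v w ω = true} := by
  have hne : (Sum.inr w : EIdx k) ≠ pidx k v w := (pidx_ne_inr k v w w hvw).symm
  have hIF : IndepFun (Keep w) (Edge v w) μ := by
    have := hindep.indepFun hne
    rwa [Fam_inr, Fam_pidx hsym hvw] at this
  have := (indepFun_iff_measure_inter_preimage_eq_mul.mp hIF) {true} {true}
    (by trivial) (by trivial)
  exact this

lemma Zf_diag_zero {v : Fin (2*k)} {ω : Ωk} (hKv : Keep v ω = false) :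
    Zf k Edge Keep v v ω = 0 := by
  simp [Zf, hKv]

lemma D_eq (v : Fin (2*k)) (t : ℝ) (ω : Ωk) (hKv : Keep v ω = false) :
    ∑ w ∈ Finset.univ.erase v,
        (if community k w = community k v then -t else t) * Zf k Edge Keep v w ω
      = t * (((edgeCount k Edge v (sampledR k Keep (!(community k v)) ω) ω : ℕ) : ℝ)
          - ((edgeCount k Edge v (sampledR k Keep (community k v) ω) ω : ℕ) : ℝ)) := by
  classical
  set c := community k v with hcdef
  have hvin : v ∈ plantedS k c := by simp [plantedS, hcdef]
  have hbool : ∀ x y : Bool, x ≠ y → x = !y := by decide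
  have herase : Finset.univ.erase v = ((plantedS k c).erase v) ∪ plantedS k (!c) := by
    ext w
    simp only [Finset.mem_erase, Finset.mem_union, Finset.mem_univ, and_true, plantedS,
      Finset.mem_filter, true_and]
    constructor
    · intro hwv
      by_cases hcw : community k w = c
      · exact Or.inl ⟨hwv, hcw⟩
      · exact Or.inr (hbool _ _ hcw)
    · rintro (⟨hwv, _⟩ | hwc)
      · exact hwv
      · intro h
        rw [h, ← hcdef] at hwc
        exact (Bool.not_ne_self c) hwc.symm
  have hdisj : Disjoint ((plantedS k c).erase v) (plantedS k (!c)) := by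
    rw [Finset.disjoint_left]
    intro w hw1 hw2
    have h1 : community k w = c := (Finset.mem_filter.mp (Finset.mem_of_mem_erase hw1)).2
    have h2 : community k w = !c := (Finset.mem_filter.mp hw2).2
    rw [h1] at h2
    exact (Bool.not_ne_self c) h2.symm
  have hsum_b : ∀ b, ((edgeCount k Edge v (sampledR k Keep b ω) ω : ℕ) : ℝ)
      = ∑ w ∈ plantedS k b, Zf k Edge Keep v w ω := by
    intro b
    rw [edgeCount_sampledR, Finset.card_filter]
    push_cast
    exact Finset.sum_congr rfl (fun w hw => by simp [Zf])
  rw [herase, Finset.sum_union hdisj]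
  have h1 : ∑ w ∈ (plantedS k c).erase v,
        (if community k w = community k v then -t else t) * Zf k Edge Keep v w ω
      = ∑ w ∈ (plantedS k c).erase v, (-t) * Zf k Edge Keep v w ω :=
    Finset.sum_congr rfl (fun w hw => by
      rw [if_pos ((Finset.mem_filter.mp (Finset.mem_of_mem_erase hw)).2.trans hcdef)])
  have h2 : ∑ w ∈ plantedS k (!c),
        (if community k w = community k v then -t else t) * Zf k Edge Keep v w ω
      = ∑ w ∈ plantedS k (!c), t * Zf k Edge Keep v w ω :=
    Finset.sum_congr rfl (fun w hw => by
      rw [if_neg (fun h => by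
        have h2 : community k w = !c := (Finset.mem_filter.mp hw).2
        rw [h2, ← hcdef] at h
        exact (Bool.not_ne_self c) h)])
  rw [h1, h2, Finset.sum_erase _ (by rw [Zf_diag_zero hKv]; ring),
    hsum_b (!c), hsum_b c, ← Finset.mul_sum, ← Finset.mul_sum]
  ring


set_option maxHeartbeats 1000000 in
lemma vertex_bound
    (α β γ : ℝ) (hβ : 0 < β) (hαβ : β < α) (hγ : γ ∈ Set.Ioo (0:ℝ) 1)
    (hsym : ∀ i j, Edge i j = Edge j i)
    (hmE : ∀ i j, Measurable (Edge i j)) (hmK : ∀ v, Measurable (Keep v))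
    (hindep : iIndepFun (m := fun _ => (⊤ : MeasurableSpace Bool)) (Fam k Edge Keep) μ)
    (hk : 1 ≤ k)
    (hp1 : α * Real.log (2*(k:ℝ)) / (2*(k:ℝ)) ≤ 1)
    (hEdge : ∀ i j : Fin (2*k), i ≠ j → μ {ω | Edge i j ω = true} =
        ENNReal.ofReal (if community k i = community k j then
          α * Real.log (2*(k:ℝ)) / (2*(k:ℝ)) else β * Real.log (2*(k:ℝ)) / (2*(k:ℝ))))
    (hKeep : ∀ v, μ {ω | Keep v ω = true} = ENNReal.ofReal γ)
    (v : Fin (2*k)) :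
    (μ {ω | 0 ≤ ∑ w ∈ Finset.univ.erase v,
        (if community k w = community k v then -Real.log (Real.sqrt α / Real.sqrt β)
          else Real.log (Real.sqrt α / Real.sqrt β)) * Zf k Edge Keep v w ω}).toReal
      ≤ Real.exp (1 - γ * (Real.sqrt α - Real.sqrt β)^2 / 2 * Real.log (2*(k:ℝ))) := by
  haveI : IsProbabilityMeasure μ := hindep.isProbabilityMeasure
  obtain ⟨hγ0, hγ1⟩ := hγ
  set L := Real.log (2*(k:ℝ)) with hLdef
  have hk1 : (1:ℝ) ≤ (k:ℝ) := by exact_mod_cast hk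
  have hL0 : 0 ≤ L := Real.log_nonneg (by linarith)
  set p := α * L / (2*(k:ℝ)) with hpdef
  set q := β * L / (2*(k:ℝ)) with hqdef
  have hα : 0 < α := lt_trans hβ hαβ
  have hsa : 0 < Real.sqrt α := Real.sqrt_pos.mpr hα
  have hsb : 0 < Real.sqrt β := Real.sqrt_pos.mpr hβ
  have hsba : Real.sqrt β < Real.sqrt α := Real.sqrt_lt_sqrt (le_of_lt hβ) hαβ
  set s := Real.sqrt α / Real.sqrt β with hsdef
  have hs1 : 1 < s := (one_lt_div hsb).mpr hsba
  set t := Real.log s with htdef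
  have ht0 : 0 < t := Real.log_pos hs1
  set d := Real.sqrt β / Real.sqrt α with hddef
  have hd0 : 0 < d := div_pos hsb hsa
  have hd1 : d < 1 := (div_lt_one hsa).mpr hsba
  have hexpt : Real.exp t = s := Real.exp_log (by positivity)
  have hexpnt : Real.exp (-t) = d := by
    rw [Real.exp_neg, hexpt, hsdef, hddef, inv_div]
  have hp0 : 0 ≤ p := by rw [hpdef]; positivity
  have hq0 : 0 ≤ q := by rw [hqdef]; positivity
  set a : Fin (2*k) → ℝ := fun w => if community k w = community k v then -t else t with hadef
  set D : Ωk → ℝ := fun ω => ∑ w ∈ Finset.univ.erase v, a w * Zf k Edge Keep v w ω with hDdef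
  have hgoalset : {ω | 0 ≤ ∑ w ∈ Finset.univ.erase v,
        (if community k w = community k v then -t else t) * Zf k Edge Keep v w ω}
      = {ω | 0 ≤ D ω} := rfl
  rw [hgoalset]
  have hDm : Measurable D :=
    Finset.measurable_sum _ (fun w _ => (Zf_meas hmE hmK v w).const_mul (a w))
  have hterm_le : ∀ w (ω : Ωk), a w * Zf k Edge Keep v w ω ≤ t := by
    intro w ω
    rw [hadef]
    by_cases hcw : community k w = community k v
    · simp only [if_pos hcw]
      have := Zf_nonneg (Edge := Edge) (Keep := Keep) v w ω
      nlinarith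
    · simp only [if_neg hcw]
      have h1 := Zf_le_one (Edge := Edge) (Keep := Keep) v w ω
      nlinarith
  have hDb : ∀ ω, D ω ≤ 2*(k:ℝ)*t := by
    intro ω
    calc D ω ≤ ∑ w ∈ Finset.univ.erase v, t :=
          Finset.sum_le_sum (fun w _ => hterm_le w ω)
      _ = ((Finset.univ.erase v).card : ℝ) * t := by rw [Finset.sum_const, nsmul_eq_mul]
      _ ≤ 2*(k:ℝ)*t := by
          have hcard : ((Finset.univ.erase v).card : ℝ) ≤ 2*(k:ℝ) := by
            have h := Finset.card_le_univ (Finset.univ.erase v)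
            rw [Fintype.card_fin] at h
            exact_mod_cast h
          nlinarith
  have hint : Integrable (fun ω => Real.exp (1 * D ω)) μ := by
    refine Integrable.mono' (integrable_const (Real.exp (2*(k:ℝ)*t)))
      ((hDm.const_mul 1).exp).aestronglyMeasurable (ae_of_all _ (fun ω => ?_))
    rw [Real.norm_eq_abs, Real.abs_exp]
    exact Real.exp_le_exp.mpr (by rw [one_mul]; exact hDb ω)
  have markov := measure_ge_le_exp_mul_mgf (X := D) (μ := μ) (t := 1) 0 zero_le_one hint
  norm_num at markov
  have hmgf : mgf D μ 1 = ∏ w ∈ Finset.univ.erase v,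
      ∫ ω, Real.exp (a w * Zf k Edge Keep v w ω) ∂μ := by
    have h0 : mgf D μ 1 = ∫ ω, Real.exp (1 * D ω) ∂μ := rfl
    rw [h0]
    simp_rw [one_mul, hDdef, Real.exp_sum]
    exact integral_prod_exp hsym hmE hmK hindep v a _ (Finset.notMem_erase v _)
  have hfac : ∀ w ∈ Finset.univ.erase v, ∫ ω, Real.exp (a w * Zf k Edge Keep v w ω) ∂μ
      = if community k w = community k v then 1 + (d - 1)*(γ*p) else 1 + (s-1)*(γ*q) := by
    intro w hw
    have hwv : v ≠ w := (Finset.ne_of_mem_erase hw).symm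
    rw [integral_exp_single hmE hmK v w (a w)]
    have hKE : (μ {ω | Keep w ω = true ∧ Edge v w ω = true}).toReal
        = γ * (if community k v = community k w then p else q) := by
      rw [measure_KE hsym hmE hmK hindep hwv, hKeep w, hEdge v w hwv,
        ENNReal.toReal_mul, ENNReal.toReal_ofReal hγ0.le]
      congr 1
      split_ifs with h
      · exact ENNReal.toReal_ofReal hp0
      · exact ENNReal.toReal_ofReal hq0
    rw [hKE]
    simp only [hadef]
    by_cases hcw : community k w = community k v
    · rw [if_pos hcw, if_pos hcw.symm, if_pos hcw, hexpnt]
    · rw [if_neg hcw, if_neg (fun h => hcw h.symm), if_neg hcw, hexpt]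
  set c := community k v with hcdef
  have hbool : ∀ x y : Bool, x ≠ y → x = !y := by decide
  have hvin : v ∈ plantedS k c := by simp [plantedS, hcdef]
  have herase : Finset.univ.erase v = ((plantedS k c).erase v) ∪ plantedS k (!c) := by
    ext w
    simp only [Finset.mem_erase, Finset.mem_union, Finset.mem_univ, and_true, plantedS,
      Finset.mem_filter, true_and]
    constructor
    · intro hwv
      by_cases hcw : community k w = c
      · exact Or.inl ⟨hwv, hcw⟩
      · exact Or.inr (hbool _ _ hcw)
    · rintro (⟨hwv, _⟩ | hwc)
      · exact hwv
      · intro h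
        rw [h] at hwc
        rw [← hcdef] at hwc
        exact (Bool.not_ne_self c) hwc.symm
  have hdisj : Disjoint ((plantedS k c).erase v) (plantedS k (!c)) := by
    rw [Finset.disjoint_left]
    intro w hw1 hw2
    have h1 : community k w = c := (Finset.mem_filter.mp (Finset.mem_of_mem_erase hw1)).2
    have h2 : community k w = !c := (Finset.mem_filter.mp hw2).2
    rw [h1] at h2
    exact (Bool.not_ne_self c) h2.symm
  have hcard1 : ((plantedS k c).erase v).card = k - 1 := by
    rw [Finset.card_erase_of_mem hvin, card_plantedS]
  have hprodval : ∏ w ∈ Finset.univ.erase v,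
      ∫ ω, Real.exp (a w * Zf k Edge Keep v w ω) ∂μ
      = (1 + (d - 1)*(γ*p))^(k-1) * (1 + (s-1)*(γ*q))^k := by
    rw [Finset.prod_congr rfl hfac, herase, Finset.prod_union hdisj]
    congr 1
    · rw [Finset.prod_congr rfl (fun w hw => if_pos
        ((Finset.mem_filter.mp (Finset.mem_of_mem_erase hw)).2.trans hcdef.symm ▸
          (Finset.mem_filter.mp (Finset.mem_of_mem_erase hw)).2)),
        Finset.prod_const, hcard1]
    · rw [Finset.prod_congr rfl (fun w hw => if_neg (fun h => by
        have h2 : community k w = !c := (Finset.mem_filter.mp hw).2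
        rw [h2] at h
        exact (Bool.not_ne_self c) h)),
        Finset.prod_const, card_plantedS]
  have hγp : γ * p ≤ 1 := mul_le_one₀ hγ1.le hp0 hp1
  have hγp0 : 0 ≤ γ * p := mul_nonneg hγ0.le hp0
  have hb1 : 0 ≤ 1 + (d - 1)*(γ*p) := by
    have h := mul_le_mul_of_nonneg_right (show (-1:ℝ) ≤ d - 1 by linarith) hγp0
    linarith
  have hb2 : 0 ≤ 1 + (s - 1)*(γ*q) := by
    have h := mul_nonneg (show (0:ℝ) ≤ s - 1 by linarith) (mul_nonneg hγ0.le hq0)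
    linarith
  have he1 : 1 + (d - 1)*(γ*p) ≤ Real.exp ((d - 1)*(γ*p)) := by
    have := Real.add_one_le_exp ((d - 1)*(γ*p)); linarith
  have he2 : 1 + (s - 1)*(γ*q) ≤ Real.exp ((s - 1)*(γ*q)) := by
    have := Real.add_one_le_exp ((s - 1)*(γ*q)); linarith
  have hpowbound : (1 + (d - 1)*(γ*p))^(k-1) * (1 + (s-1)*(γ*q))^k
      ≤ Real.exp (((k:ℝ)-1)*((d - 1)*(γ*p)) + (k:ℝ)*((s-1)*(γ*q))) := by
    have hc1 : (((k-1 : ℕ)):ℝ) = (k:ℝ) - 1 := by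
      rw [Nat.cast_sub hk]; norm_num
    rw [Real.exp_add]
    have p1 : (1 + (d - 1)*(γ*p))^(k-1) ≤ Real.exp (((k:ℝ)-1)*((d - 1)*(γ*p))) := by
      calc (1 + (d - 1)*(γ*p))^(k-1) ≤ (Real.exp ((d - 1)*(γ*p)))^(k-1) :=
            pow_le_pow_left₀ hb1 he1 (k-1)
        _ = Real.exp (((k:ℝ)-1)*((d - 1)*(γ*p))) := by
            rw [← Real.exp_nat_mul, hc1]
    have p2 : (1 + (s - 1)*(γ*q))^k ≤ Real.exp ((k:ℝ)*((s-1)*(γ*q))) := by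
      calc (1 + (s - 1)*(γ*q))^k ≤ (Real.exp ((s - 1)*(γ*q)))^k :=
            pow_le_pow_left₀ hb2 he2 k
        _ = Real.exp ((k:ℝ)*((s-1)*(γ*q))) := by rw [← Real.exp_nat_mul]
    have e1nn : (0:ℝ) ≤ (1 + (d - 1)*(γ*p))^(k-1) := pow_nonneg hb1 _
    have e2nn : (0:ℝ) ≤ (1 + (s - 1)*(γ*q))^k := pow_nonneg hb2 _
    exact mul_le_mul p1 p2 e2nn (Real.exp_nonneg _)
  have hk0 : (k:ℝ) ≠ 0 := by positivity
  have hkp : (k:ℝ) * p = α * L / 2 := by rw [hpdef]; field_simp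
  have hkq : (k:ℝ) * q = β * L / 2 := by rw [hqdef]; field_simp
  have hsq_a : Real.sqrt α * Real.sqrt α = α := Real.mul_self_sqrt hα.le
  have hsq_b : Real.sqrt β * Real.sqrt β = β := Real.mul_self_sqrt hβ.le
  have hd_id : α * d = Real.sqrt α * Real.sqrt β := by
    rw [hddef]
    field_simp
    nlinarith [hsq_a]
  have hs_id : β * s = Real.sqrt β * Real.sqrt α := by
    rw [hsdef]
    field_simp
    nlinarith [hsq_b]
  have hθ : (Real.sqrt α - Real.sqrt β)^2 = α + β - 2*(Real.sqrt α*Real.sqrt β) := by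
    nlinarith [hsq_a, hsq_b]
  have hEbound : ((k:ℝ)-1)*((d - 1)*(γ*p)) + (k:ℝ)*((s-1)*(γ*q))
      ≤ 1 - γ * (Real.sqrt α - Real.sqrt β)^2 / 2 * L := by
    have expand : ((k:ℝ)-1)*((d - 1)*(γ*p)) + (k:ℝ)*((s-1)*(γ*q))
        = (d-1)*γ*((k:ℝ)*p) + (s-1)*γ*((k:ℝ)*q) + (1-d)*(γ*p) := by ring
    have hγp1 : (1-d)*(γ*p) ≤ 1 := mul_le_one₀ (by linarith) hγp0 hγp
    rw [expand, hkp, hkq, hθ]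
    have main : (d-1)*γ*(α * L / 2) + (s-1)*γ*(β * L / 2)
        = - (γ * (α + β - 2*(Real.sqrt α*Real.sqrt β)) / 2 * L) := by
      linear_combination (γ*L/2) * hd_id + (γ*L/2) * hs_id
    linarith [main.le, main.ge]
  calc (μ {ω | 0 ≤ D ω}).toReal ≤ mgf D μ 1 := markov
    _ = (1 + (d - 1)*(γ*p))^(k-1) * (1 + (s-1)*(γ*q))^k := by rw [hmgf, hprodval]
    _ ≤ Real.exp (((k:ℝ)-1)*((d - 1)*(γ*p)) + (k:ℝ)*((s-1)*(γ*q))) := hpowbound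
    _ ≤ Real.exp (1 - γ * (Real.sqrt α - Real.sqrt β)^2 / 2 * L) :=
        Real.exp_le_exp.mpr hEbound


end Prob


set_option maxHeartbeats 1000000 in
/-- **Oracle bound** (Proposition 1): in the SBM `G(2k; p, q)` with
`p = α log(2k)/(2k)`, `q = β log(2k)/(2k)`, sampling each vertex independently with
probability `γ > 2/(√α - √β)²`, the majority-vote completion of the true sampled
communities recovers the planted communities with probability `1 - o(1)`. -/
theorem oracle_bound (α β γ : ℝ) (hβ : 0 < β) (hαβ : β < α)
    (hγ : γ ∈ Set.Ioo (0 : ℝ) 1)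
    (hγth : γ > 2 / (Real.sqrt α - Real.sqrt β) ^ 2)
    (Ω : ℕ → Type*) (mΩ : ∀ k, MeasurableSpace (Ω k)) (μ : ∀ k, Measure (Ω k))
    (hprob : ∀ k, IsProbabilityMeasure (μ k))
    (Edge : ∀ k, Fin (2 * k) → Fin (2 * k) → Ω k → Bool)
    (Keep : ∀ k, Fin (2 * k) → Ω k → Bool)
    (hsym : ∀ k i j, Edge k i j = Edge k j i)
    (hmeasE : ∀ k i j, Measurable (Edge k i j))
    (hmeasK : ∀ k v, Measurable (Keep k v))
    (hindep : ∀ k, iIndepFun (m := fun _ => (⊤ : MeasurableSpace Bool))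
        (Sum.elim
          (fun e : {p : Fin (2 * k) × Fin (2 * k) // p.1 < p.2} => Edge k e.1.1 e.1.2)
          (fun v : Fin (2 * k) => Keep k v)) (μ k))
    (hEdge : ∀ k : ℕ, α * Real.log (2 * (k : ℝ)) / (2 * (k : ℝ)) ≤ 1 →
        ∀ i j : Fin (2 * k), i ≠ j →
        μ k {ω | Edge k i j ω = true} =
          ENNReal.ofReal (if community k i = community k j then
              α * Real.log (2 * (k : ℝ)) / (2 * (k : ℝ))
            else β * Real.log (2 * (k : ℝ)) / (2 * (k : ℝ))))
    (hKeep : ∀ k v, μ k {ω | Keep k v ω = true} = ENNReal.ofReal γ) :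
    Tendsto
      (fun k => μ k {ω | ∀ b : Bool,
        majorityS k (Edge k) (Keep k) (fun b' ω' => sampledR k (Keep k) b' ω') b ω
          = plantedS k b})
      atTop (nhds 1) := by
  classical
  obtain ⟨hγ0, hγ1⟩ := hγ
  have hα : 0 < α := hβ.trans hαβ
  have hsba : Real.sqrt β < Real.sqrt α := Real.sqrt_lt_sqrt hβ.le hαβ
  have hθ0 : 0 < (Real.sqrt α - Real.sqrt β)^2 := pow_pos (sub_pos.mpr hsba) 2
  have hγθ : 2 < γ * ((Real.sqrt α - Real.sqrt β)^2) := by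
    rw [gt_iff_lt, div_lt_iff₀ hθ0] at hγth
    linarith
  set r : ℕ → ℝ := fun k =>
    2*(k:ℝ) * Real.exp (1 - γ * (Real.sqrt α - Real.sqrt β)^2 / 2 * Real.log (2*(k:ℝ)))
    with hrdef
  have h2k : Tendsto (fun k : ℕ => 2*(k:ℝ)) atTop atTop :=
    (tendsto_natCast_atTop_atTop).const_mul_atTop two_pos
  have hlog : Tendsto (fun k : ℕ => Real.log (2*(k:ℝ))) atTop atTop :=
    Real.tendsto_log_atTop.comp h2k
  have hlin : Tendsto (fun k : ℕ =>
      1 + (1 - γ * (Real.sqrt α - Real.sqrt β)^2 / 2) * Real.log (2*(k:ℝ))) atTop atBot := by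
    apply Filter.tendsto_atBot_add_const_left
    exact hlog.const_mul_atTop_of_neg (by linarith)
  have hr0 : Tendsto r atTop (nhds 0) := by
    have hcongr : ∀ᶠ k : ℕ in atTop,
        Real.exp (1 + (1 - γ * (Real.sqrt α - Real.sqrt β)^2 / 2) * Real.log (2*(k:ℝ)))
          = r k := by
      filter_upwards [eventually_ge_atTop 1] with k hk
      have hk1 : (1:ℝ) ≤ (k:ℝ) := by exact_mod_cast hk
      have h2kpos : (0:ℝ) < 2*(k:ℝ) := by linarith
      rw [hrdef]
      calc Real.exp (1 + (1 - γ * (Real.sqrt α - Real.sqrt β)^2 / 2) * Real.log (2*(k:ℝ)))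
          = Real.exp (Real.log (2*(k:ℝ))
              + (1 - γ * (Real.sqrt α - Real.sqrt β)^2 / 2 * Real.log (2*(k:ℝ)))) := by
            ring_nf
        _ = Real.exp (Real.log (2*(k:ℝ)))
              * Real.exp (1 - γ * (Real.sqrt α - Real.sqrt β)^2 / 2 * Real.log (2*(k:ℝ))) :=
            Real.exp_add _ _
        _ = 2*(k:ℝ) * Real.exp (1 - γ * (Real.sqrt α - Real.sqrt β)^2 / 2 * Real.log (2*(k:ℝ))) := by
            rw [Real.exp_log h2kpos]
    exact Tendsto.congr' hcongr (Real.tendsto_exp_atBot.comp hlin)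
  have hp1ev : ∀ᶠ k : ℕ in atTop, α * Real.log (2*(k:ℝ)) / (2*(k:ℝ)) ≤ 1 := by
    have hev1 : ∀ᶠ x : ℝ in atTop, ‖Real.log x‖ ≤ α⁻¹ * ‖x‖ :=
      Real.isLittleO_log_id_atTop.def (by positivity)
    filter_upwards [h2k.eventually hev1, eventually_ge_atTop 1] with k hk2 hk1
    have hk1' : (1:ℝ) ≤ (k:ℝ) := by exact_mod_cast hk1
    have h2kpos : (0:ℝ) < 2*(k:ℝ) := by linarith
    rw [Real.norm_eq_abs, Real.norm_eq_abs, abs_of_nonneg (le_of_lt h2kpos)] at hk2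
    have hlog_le : Real.log (2*(k:ℝ)) ≤ α⁻¹ * (2*(k:ℝ)) :=
      le_trans (le_abs_self _) hk2
    rw [div_le_one h2kpos]
    calc α * Real.log (2*(k:ℝ)) ≤ α * (α⁻¹ * (2*(k:ℝ))) :=
          mul_le_mul_of_nonneg_left hlog_le hα.le
      _ = 2*(k:ℝ) := by field_simp
  apply tendsto_of_tendsto_of_tendsto_of_le_of_le'
    (g := fun k => 1 - ENNReal.ofReal (r k)) (h := fun _ : ℕ => (1:ENNReal))
  · have := ENNReal.Tendsto.sub (tendsto_const_nhds (x := (1:ENNReal)))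
      (ENNReal.tendsto_ofReal hr0) (Or.inl ENNReal.one_ne_top)
    simpa using this
  · exact tendsto_const_nhds
  · filter_upwards [hp1ev, eventually_ge_atTop 1] with k hp1 hk1
    haveI := hprob k
    rw [tsub_le_iff_right]
    set t := Real.log (Real.sqrt α / Real.sqrt β) with htdef
    set Bad : Fin (2*k) → Set (Ω k) := fun v => {ω | 0 ≤ ∑ w ∈ Finset.univ.erase v,
        (if community k w = community k v then -t else t) * Zf k (Edge k) (Keep k) v w ω}
      with hBaddef
    set S : Set (Ω k) := {ω | ∀ b : Bool,
        majorityS k (Edge k) (Keep k) (fun b' ω' => sampledR k (Keep k) b' ω') b ω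
          = plantedS k b} with hSdef
    have ht0 : 0 ≤ t :=
      (Real.log_pos ((one_lt_div (Real.sqrt_pos.mpr hβ)).mpr hsba)).le
    have hsub : Sᶜ ⊆ ⋃ v, Bad v := by
      intro ω hω
      simp only [hSdef, Set.mem_compl_iff, Set.mem_setOf_eq] at hω
      have hex : ∃ v, Keep k v ω = false ∧
          edgeCount k (Edge k) v (sampledR k (Keep k) (community k v) ω) ω
            ≤ edgeCount k (Edge k) v (sampledR k (Keep k) (!(community k v)) ω) ω := by
        by_contra hno
        push_neg at hno
        exact hω (good_imp k (Edge k) (Keep k) ω (fun v hv => hno v hv))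
      obtain ⟨v, hKv, hle⟩ := hex
      refine Set.mem_iUnion.mpr ⟨v, ?_⟩
      show (0:ℝ) ≤ ∑ w ∈ Finset.univ.erase v,
        (if community k w = community k v then -t else t) * Zf k (Edge k) (Keep k) v w ω
      rw [D_eq v t ω hKv]
      have hcast : ((edgeCount k (Edge k) v (sampledR k (Keep k) (community k v) ω) ω : ℕ) : ℝ)
          ≤ ((edgeCount k (Edge k) v (sampledR k (Keep k) (!(community k v)) ω) ω : ℕ) : ℝ) := by
        exact_mod_cast hle
      exact mul_nonneg ht0 (by linarith)
    have hk1' : 1 ≤ k := hk1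
    have hunion : μ k Sᶜ ≤ ENNReal.ofReal (r k) := by
      have hB : ∀ v : Fin (2*k), μ k (Bad v) ≤ ENNReal.ofReal
          (Real.exp (1 - γ * (Real.sqrt α - Real.sqrt β)^2 / 2 * Real.log (2*(k:ℝ)))) := by
        intro v
        have hvb := vertex_bound (μ := μ k) (Edge := Edge k) (Keep := Keep k)
          α β γ hβ hαβ ⟨hγ0, hγ1⟩ (hsym k) (hmeasE k) (hmeasK k) (hindep k) hk1' hp1
          (hEdge k hp1) (hKeep k) v
        calc μ k (Bad v) = ENNReal.ofReal ((μ k (Bad v)).toReal) :=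
              (ENNReal.ofReal_toReal (measure_ne_top _ _)).symm
          _ ≤ _ := ENNReal.ofReal_le_ofReal hvb
      calc μ k Sᶜ ≤ μ k (⋃ v, Bad v) := measure_mono hsub
        _ ≤ ∑' v, μ k (Bad v) := measure_iUnion_le _
        _ = ∑ v : Fin (2*k), μ k (Bad v) := tsum_fintype _
        _ ≤ ∑ _v : Fin (2*k), ENNReal.ofReal
              (Real.exp (1 - γ * (Real.sqrt α - Real.sqrt β)^2 / 2 * Real.log (2*(k:ℝ)))) :=
            Finset.sum_le_sum (fun v _ => hB v)
        _ = ENNReal.ofReal (r k) := by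
            rw [Finset.sum_const, Finset.card_univ, Fintype.card_fin, nsmul_eq_mul]
            rw [show ((2*k : ℕ) : ENNReal) = ENNReal.ofReal ((2*k : ℕ) : ℝ) by
              rw [ENNReal.ofReal_natCast]]
            rw [← ENNReal.ofReal_mul (by positivity)]
            congr 1
            rw [hrdef]
            push_cast
            ring
    calc (1:ENNReal) = μ k Set.univ := measure_univ.symm
      _ = μ k (S ∪ Sᶜ) := by rw [Set.union_compl_self]
      _ ≤ μ k S + μ k Sᶜ := measure_union_le _ _
      _ ≤ μ k S + ENNReal.ofReal (r k) := add_le_add le_rfl hunion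
  · exact Filter.Eventually.of_forall (fun k => prob_le_one)
end
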